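/- If f : G → E satisfies the Drygas inequality and additionally f is even (f(-x) = f(x)), then f satisfies the quadratic functional equation f(x+y)+f(x-y) = 2f(x)+2f(y) for all x, y ∈ G. -/

import Mathlib

lemma stmt19_aux {E : Type*} [NormedAddCommGroup E] [InnerProductSpace ℝ E]
    (a b u v : E) (h1 : ‖u + v - b‖ ≤ ‖a‖) (h2 : ‖u + v - a‖ ≤ ‖b‖)
    (h3 : ‖a + b - v‖ ≤ ‖u‖) (h4 : ‖a + b - u‖ ≤ ‖v‖) : a + b = u + v := by
  have sq1 : ‖u + v - b‖ ^ 2 ≤ ‖a‖ ^ 2 := pow_le_pow_left₀ (norm_nonneg _) h1 2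
  have sq2 : ‖u + v - a‖ ^ 2 ≤ ‖b‖ ^ 2 := pow_le_pow_left₀ (norm_nonneg _) h2 2
  have sq3 : ‖a + b - v‖ ^ 2 ≤ ‖u‖ ^ 2 := pow_le_pow_left₀ (norm_nonneg _) h3 2
  have sq4 : ‖a + b - u‖ ^ 2 ≤ ‖v‖ ^ 2 := pow_le_pow_left₀ (norm_nonneg _) h4 2
  rw [norm_sub_sq_real] at sq1 sq2 sq3 sq4
  have ea : (inner ℝ (u + v) (a + b) : ℝ) = inner ℝ (u + v) a + inner ℝ (u + v) b :=
    inner_add_right _ _ _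
  have eb : (inner ℝ (a + b) (u + v) : ℝ) = inner ℝ (a + b) u + inner ℝ (a + b) v :=
    inner_add_right _ _ _
  have ec : (inner ℝ (u + v) (a + b) : ℝ) = inner ℝ (a + b) (u + v) :=
    real_inner_comm _ _
  have key : ‖a + b - (u + v)‖ ^ 2 ≤ 0 := by
    rw [norm_sub_sq_real]; linarith
  have h5 : ‖a + b - (u + v)‖ ≤ 0 := by nlinarith [norm_nonneg (a + b - (u + v))]
  exact eq_of_sub_eq_zero (norm_eq_zero.mp (le_antisymm h5 (norm_nonneg _)))

theorem stmt19 {G E : Type*} [AddCommGroup G] [NormedAddCommGroup E]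
    [InnerProductSpace ℝ E] (f : G → E) (heven : ∀ x : G, f (-x) = f x)
    (h : ∀ x y : G, ‖2 • f x + f y + f (-y) - f (x - y)‖ ≤ ‖f (x + y)‖) :
    ∀ x y : G, f (x + y) + f (x - y) = 2 • f x + 2 • f y := by
  have h0 : f 0 = 0 := by
    have h00 := h 0 0
    simp only [neg_zero, sub_zero, add_zero, two_nsmul] at h00
    rw [show f 0 + f 0 + f 0 + f 0 - f 0 = (3:ℝ) • f 0 from by module, norm_smul] at h00
    simp only [Real.norm_ofNat] at h00
    have hn : ‖f 0‖ ≤ 0 := by linarith [norm_nonneg (f 0)]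
    exact norm_eq_zero.mp (le_antisymm hn (norm_nonneg _))
  have hd : ∀ z : G, f (z + z) = f z + f z + f z + f z := by
    intro z
    have hz := h z (-z)
    rw [heven, neg_neg, sub_neg_eq_add, add_neg_cancel, h0, norm_zero, two_nsmul] at hz
    have hv : f z + f z + f z + f z - f (z + z) = 0 :=
      norm_eq_zero.mp (le_antisymm hz (norm_nonneg _))
    exact (eq_of_sub_eq_zero hv).symm
  intro x y
  have i1 : ‖(f x + f x) + (f y + f y) - f (x - y)‖ ≤ ‖f (x + y)‖ := by
    have h1 := h x y
    rw [heven, two_nsmul] at h1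
    rw [show (f x + f x) + (f y + f y) - f (x - y)
        = f x + f x + f y + f y - f (x - y) from by abel]
    exact h1
  have i2 : ‖(f x + f x) + (f y + f y) - f (x + y)‖ ≤ ‖f (x - y)‖ := by
    have h2 := h x (-y)
    rw [sub_neg_eq_add, ← sub_eq_add_neg] at h2
    simp only [heven] at h2
    rw [two_nsmul] at h2
    rw [show (f x + f x) + (f y + f y) - f (x + y)
        = f x + f x + f y + f y - f (x + y) from by abel]
    exact h2
  have i3 : ‖f (x + y) + f (x - y) - (f y + f y)‖ ≤ ‖f x + f x‖ := by
    have h3 := h (x + y) (x - y)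
    rw [show x + y - (x - y) = y + y from by abel,
        show x + y + (x - y) = x + x from by abel, heven, hd, hd, two_nsmul] at h3
    rw [show f (x + y) + f (x + y) + f (x - y) + f (x - y) - (f y + f y + f y + f y)
          = (2:ℝ) • (f (x + y) + f (x - y) - (f y + f y)) from by module,
        show f x + f x + f x + f x = (2:ℝ) • (f x + f x) from by module,
        norm_smul, norm_smul] at h3
    simp only [Real.norm_ofNat] at h3
    linarith
  have i4 : ‖f (x + y) + f (x - y) - (f x + f x)‖ ≤ ‖f y + f y‖ := by
    have h4 := h (x + y) (y - x)
    rw [show x + y - (y - x) = x + x from by abel,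
        show x + y + (y - x) = y + y from by abel,
        show y - x = -(x - y) from by abel] at h4
    simp only [heven, neg_neg] at h4
    rw [hd, hd, two_nsmul] at h4
    rw [show f (x + y) + f (x + y) + f (x - y) + f (x - y) - (f x + f x + f x + f x)
          = (2:ℝ) • (f (x + y) + f (x - y) - (f x + f x)) from by module,
        show f y + f y + f y + f y = (2:ℝ) • (f y + f y) from by module,
        norm_smul, norm_smul] at h4
    simp only [Real.norm_ofNat] at h4
    linarith
  have := stmt19_aux (f (x + y)) (f (x - y)) (f x + f x) (f y + f y) i1 i2 i3 i4
  rw [two_nsmul, two_nsmul]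
  exact this
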